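/- No two of the following six elements of Φ⁴ are related by any finite composition of the maps a, b, c, d, e, f (equivalently, they are pairwise inequivalent under the smallest equivalence relation on Φ⁴ relating every 4-tuple to its image under each of these maps wherever defined): (0,∅,∅,∅), (∞,∅,∅,∅), (−1,−2,−1,∅), (−2,−2,−2,−2), (−1,−3,−2,−3), (−1,−2,−3,−4). -/

import Mathlib

/-! Slopes: `QInf = ℚ ∪ {∞}` with `none = ∞`; `Phi = ℚ ∪ {∞, ∅}` with outer `none = ∅`. -/

abbrev QInf := Option ℚ
abbrev Phi := Option QInf

/-- The Möbius map `x ↦ (a·x + b)/(c·x + d)` extended projectively to `ℚ ∪ {∞}`. -/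
def mob (a b c d : ℚ) : QInf → QInf
  | none => if c = 0 then none else some (a / c)
  | some x => if c * x + d = 0 then none else some ((a * x + b) / (c * x + d))

/-- The extension of a Möbius map to `Φ`, fixing the empty slope `∅`. -/
def mobP (a b c d : ℚ) : Phi → Phi := Option.map (mob a b c d)

/-- The nonempty finite slope `x ∈ ℚ`. -/
def sl (x : ℚ) : Phi := some (some x)
/-- The slope `∞`. -/
def inf : Phi := some none
/-- The empty slope `∅`. -/
def emp : Phi := none

abbrev Phi4 := Fin 4 → Phi

/-- a(α₁,α₂,α₃,α₄) = (α₄,α₁,α₂,α₃). -/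
def mapA (x : Phi4) : Phi4 := ![x 3, x 0, x 1, x 2]

/-- b(α₁,α₂,α₃,α₄) = (α₄,α₃,α₂,α₁). -/
def mapB (x : Phi4) : Phi4 := ![x 3, x 2, x 1, x 0]

/-- c(α₁,α₂,α₃,α₄) = ((α₁−2)/(α₁−1), (α₂−2)/(α₂−1), (α₃−2)/(α₃−1), (α₄−2)/(α₄−1)). -/
def mapC (x : Phi4) : Phi4 :=
  ![mobP 1 (-2) 1 (-1) (x 0), mobP 1 (-2) 1 (-1) (x 1),
    mobP 1 (-2) 1 (-1) (x 2), mobP 1 (-2) 1 (-1) (x 3)]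

/-- d(α₁,α₂,α₃,α₄) = (2−α₁, α₂/(α₂−1), 2−α₃, α₄/(α₄−1)). -/
def mapD (x : Phi4) : Phi4 :=
  ![mobP (-1) 2 0 1 (x 0), mobP 1 0 1 (-1) (x 1),
    mobP (-1) 2 0 1 (x 2), mobP 1 0 1 (-1) (x 3)]

/-- The graph of the partial map e(−1,α₂,α₃,α₄) = (−1, α₃−1, α₂+1, α₄), defined exactly
on 4-tuples with first entry −1. -/
def eRel (x y : Phi4) : Prop :=
  x 0 = sl (-1) ∧ y = ![sl (-1), mobP 1 (-1) 0 1 (x 2), mobP 1 1 0 1 (x 1), x 3]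

/-- The graph of the partial map f(−1,−2,−2,α₄) = (−1,−2,−2,−α₄−4), defined exactly on
4-tuples of the form (−1,−2,−2,α₄). -/
def fRel (x y : Phi4) : Prop :=
  x 0 = sl (-1) ∧ x 1 = sl (-2) ∧ x 2 = sl (-2) ∧
  y = ![sl (-1), sl (-2), sl (-2), mobP (-1) (-4) 0 1 (x 3)]

/-- One application of a, b, c, d, e or f (wherever defined). -/
def stepM4 (x y : Phi4) : Prop :=
  y = mapA x ∨ y = mapB x ∨ y = mapC x ∨ y = mapD x ∨ eRel x y ∨ fRel x y

/-! ### Parity-type invariant -/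

/-- Parity type of a fraction `m/n`: `0` = even numerator, `2` = even denominator,
`1` = both odd. -/
def tq (m n : ℤ) : Fin 4 := if m % 2 = 0 then 0 else if n % 2 = 0 then 2 else 1

/-- Parity type of a slope: `3` for `∅`, `2` for `∞`, otherwise `tq num den`. -/
def tp : Phi → Fin 4
  | none => 3
  | some none => 2
  | some (some q) => tq q.num q.den

def s4 : Fin 4 → Fin 4 := ![0, 2, 1, 3]
def t4 : Fin 4 → Fin 4 := ![1, 0, 2, 3]

lemma parity_div (a b : ℤ) (hb : b ≠ 0) (h : Nat.Coprime a.natAbs b.natAbs) :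
    (Even ((a / b : ℚ)).num ↔ Even a) ∧ (Even (((a / b : ℚ)).den : ℤ) ↔ Even b) := by
  rcases hb.lt_or_gt with hneg | hpos
  · have h2 : ((a : ℚ) / b) = ((-a : ℤ) : ℚ) / ((-b : ℤ) : ℚ) := by
      push_cast; rw [neg_div_neg_eq]
    have hpos' : (0 : ℤ) < -b := by omega
    have hcop : Nat.Coprime (-a).natAbs (-b).natAbs := by
      rwa [Int.natAbs_neg, Int.natAbs_neg]
    rw [h2, Rat.num_div_eq_of_coprime hpos' hcop, Rat.den_div_eq_of_coprime hpos' hcop]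
    constructor <;> rw [even_neg]
  · rw [Rat.num_div_eq_of_coprime hpos h, Rat.den_div_eq_of_coprime hpos h]
    exact ⟨Iff.rfl, Iff.rfl⟩

lemma mob_parity (a b c d : ℤ) (x : ℚ)
    (hdet : a * d - b * c = 1 ∨ a * d - b * c = -1)
    (hne : (c : ℚ) * x + (d : ℚ) ≠ 0) :
    (Even ((((a : ℚ) * x + b) / ((c : ℚ) * x + d)).num)
        ↔ Even (a * x.num + b * (x.den : ℤ))) ∧
    (Even (((((a : ℚ) * x + b) / ((c : ℚ) * x + d)).den : ℤ))
        ↔ Even (c * x.num + d * (x.den : ℤ))) := by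
  set p := x.num with hp
  set δ := (x.den : ℤ) with hdd
  have hδ0 : (0 : ℤ) < δ := by rw [hdd]; exact_mod_cast x.pos
  have hδQ : ((δ : ℤ) : ℚ) ≠ 0 := by exact_mod_cast hδ0.ne'
  have hx : x = (p : ℚ) / (δ : ℚ) := by rw [hp, hdd]; push_cast; exact (Rat.num_div_den x).symm
  have e1 : (a : ℚ) * ((p : ℚ) / (δ : ℚ)) + b = ((a * p + b * δ : ℤ) : ℚ) / ((δ : ℤ) : ℚ) := by
    push_cast
    field_simp
  have e2 : (c : ℚ) * ((p : ℚ) / (δ : ℚ)) + d = ((c * p + d * δ : ℤ) : ℚ) / ((δ : ℤ) : ℚ) := by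
    push_cast
    field_simp
  have hB : c * p + d * δ ≠ 0 := by
    intro h0
    apply hne
    rw [hx, e2, show ((c * p + d * δ : ℤ) : ℚ) = 0 from by exact_mod_cast h0, zero_div]
  have key : ((a : ℚ) * x + b) / ((c : ℚ) * x + d)
      = ((a * p + b * δ : ℤ) : ℚ) / ((c * p + d * δ : ℤ) : ℚ) := by
    rw [hx, e1, e2, div_div_div_comm, div_self hδQ, div_one]
  have hpd : IsCoprime p δ := Int.isCoprime_iff_gcd_eq_one.mpr x.reduced
  obtain ⟨u, v, huv⟩ := hpd
  have hcop : IsCoprime (a * p + b * δ) (c * p + d * δ) := by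
    rcases hdet with h1 | h1
    · exact ⟨u * d - v * c, v * a - u * b, by linear_combination (u * p + v * δ) * h1 + huv⟩
    · exact ⟨v * c - u * d, u * b - v * a, by linear_combination (-(u * p + v * δ)) * h1 + huv⟩
  have hcop' : Nat.Coprime (a * p + b * δ).natAbs (c * p + d * δ).natAbs :=
    Int.isCoprime_iff_gcd_eq_one.mp hcop
  rw [key]
  exact parity_div _ _ hB hcop'

lemma vec4_at0 {α : Type*} (a b c d : α) : (![a, b, c, d]) 0 = a := rfl
lemma vec4_at1 {α : Type*} (a b c d : α) : (![a, b, c, d]) 1 = b := rfl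
lemma vec4_at2 {α : Type*} (a b c d : α) : (![a, b, c, d]) 2 = c := rfl
lemma vec4_at3 {α : Type*} (a b c d : α) : (![a, b, c, d]) 3 = d := rfl

lemma not_both_even (x : ℚ) : ¬(x.num % 2 = 0 ∧ ((x.den : ℤ)) % 2 = 0) := by
  rintro ⟨h1, h2⟩
  have hred : Nat.Coprime x.num.natAbs x.den := x.reduced
  have d1 : (2 : ℕ) ∣ x.num.natAbs := by
    have : (2 : ℤ) ∣ x.num := Int.dvd_of_emod_eq_zero h1
    omega
  have d2 : (2 : ℕ) ∣ x.den := by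
    have : (2 : ℤ) ∣ (x.den : ℤ) := Int.dvd_of_emod_eq_zero h2
    exact_mod_cast this
  have := Nat.dvd_gcd d1 d2
  rw [hred] at this
  omega

lemma tp_mobP_sl (a b c d : ℤ)
    (hdet : a * d - b * c = 1 ∨ a * d - b * c = -1) (x : ℚ)
    (hne : (c : ℚ) * x + (d : ℚ) ≠ 0) :
    tp (some (some (((a : ℚ) * x + b) / ((c : ℚ) * x + d))))
      = tq (a * x.num + b * (x.den : ℤ)) (c * x.num + d * (x.den : ℤ)) := by
  obtain ⟨hn, hd⟩ := mob_parity a b c d x hdet hne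
  show tq _ _ = _
  rw [Int.even_iff, Int.even_iff] at hn hd
  unfold tq
  simp only [hn, hd]

/-! Integer-level action of each Möbius map on parity types. -/

lemma tq_act_c (p δ : ℤ) :
    tq (1 * p + -2 * δ) (1 * p + -1 * δ) = s4 (tq p δ) := by
  simp only [tq, s4]
  split_ifs <;> first | rfl | (exfalso; omega)

lemma tq_act_d1 (p δ : ℤ) :
    tq (1 * p + 0 * δ) (1 * p + -1 * δ) = s4 (tq p δ) := by
  simp only [tq, s4]
  split_ifs <;> first | rfl | (exfalso; omega)

lemma tq_act_d0 (p δ : ℤ) :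
    tq (-1 * p + 2 * δ) (0 * p + 1 * δ) = tq p δ := by
  simp only [tq]
  split_ifs <;> first | rfl | (exfalso; omega)

lemma tq_act_e1 (p δ : ℤ) (hco : ¬(p % 2 = 0 ∧ δ % 2 = 0)) :
    tq (1 * p + -1 * δ) (0 * p + 1 * δ) = t4 (tq p δ) := by
  simp only [tq, t4]
  split_ifs <;> first | rfl | (exfalso; omega)

lemma tq_act_e2 (p δ : ℤ) (hco : ¬(p % 2 = 0 ∧ δ % 2 = 0)) :
    tq (1 * p + 1 * δ) (0 * p + 1 * δ) = t4 (tq p δ) := by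
  simp only [tq, t4]
  split_ifs <;> first | rfl | (exfalso; omega)

lemma tq_act_f (p δ : ℤ) :
    tq (-1 * p + -4 * δ) (0 * p + 1 * δ) = tq p δ := by
  simp only [tq]
  split_ifs <;> first | rfl | (exfalso; omega)

/-! Action of each Möbius map on the parity type of a single slope. -/

lemma tp_c (v : Phi) : tp (mobP 1 (-2) 1 (-1) v) = s4 (tp v) := by
  match v with
  | none => rfl
  | some none =>
      show tp (some (mob 1 (-2) 1 (-1) none)) = _
      norm_num [mob, tp, tq, s4]
      rfl
  | some (some x) =>
      by_cases hx : (1 : ℚ) * x + (-1) = 0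
      · have hx1 : x = 1 := by linarith
        subst hx1
        show tp (some (mob 1 (-2) 1 (-1) (some 1))) = _
        norm_num [mob, tp, tq, s4]
      · have step : mobP 1 (-2) 1 (-1) (some (some x))
            = some (some (((1 : ℚ) * x + (-2)) / ((1 : ℚ) * x + (-1)))) := by
          simp only [mobP, Option.map_some, mob, if_neg hx]
        rw [step]
        have h := tp_mobP_sl 1 (-2) 1 (-1) (Or.inl (by norm_num)) x
          (by push_cast; intro h0; exact hx (by linarith))
        have hcast : ((1 : ℚ) * x + (-2)) / ((1 : ℚ) * x + (-1))
            = (((1 : ℤ) : ℚ) * x + ((-2 : ℤ) : ℚ)) / (((1 : ℤ) : ℚ) * x + ((-1 : ℤ) : ℚ)) := by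
          push_cast; ring
        rw [hcast, h]
        show _ = s4 (tq x.num (x.den : ℤ))
        exact tq_act_c x.num (x.den : ℤ)

lemma tp_d1 (v : Phi) : tp (mobP 1 0 1 (-1) v) = s4 (tp v) := by
  match v with
  | none => rfl
  | some none =>
      show tp (some (mob 1 0 1 (-1) none)) = _
      norm_num [mob, tp, tq, s4, t4]
      rfl
  | some (some x) =>
      by_cases hx : (1 : ℚ) * x + ((-1)) = 0
      · have hx1 : x = 1 := by linarith
        subst hx1
        show tp (some (mob 1 0 1 (-1) (some 1))) = _
        norm_num [mob, tp, tq, s4, t4]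
      · have step : mobP 1 0 1 (-1) (some (some x))
            = some (some (((1 : ℚ) * x + (0)) / ((1 : ℚ) * x + ((-1))))) := by
          simp only [mobP, Option.map_some, mob, if_neg hx]
        rw [step]
        have h := tp_mobP_sl 1 0 1 (-1) (Or.inr (by norm_num)) x
          (by push_cast; intro h0; exact hx (by push_cast; linarith))
        have hcast : ((1 : ℚ) * x + (0)) / ((1 : ℚ) * x + ((-1)))
            = (((1 : ℤ) : ℚ) * x + ((0 : ℤ) : ℚ)) / (((1 : ℤ) : ℚ) * x + (((-1) : ℤ) : ℚ)) := by
          push_cast; ring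
        rw [hcast, h]
        show _ = s4 (tq x.num (x.den : ℤ))
        exact tq_act_d1 x.num (x.den : ℤ)

lemma tp_d0 (v : Phi) : tp (mobP (-1) 2 0 1 v) = tp v := by
  match v with
  | none => rfl
  | some none =>
      show tp (some (mob (-1) 2 0 1 none)) = _
      norm_num [mob, tp, tq, s4, t4]
  | some (some x) =>
      have hx : ¬((0 : ℚ) * x + (1) = 0) := by simp
      have step : mobP (-1) 2 0 1 (some (some x))
          = some (some ((((-1) : ℚ) * x + (2)) / ((0 : ℚ) * x + (1)))) := by
        simp only [mobP, Option.map_some, mob, if_neg hx]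
      rw [step]
      have h := tp_mobP_sl (-1) 2 0 1 (Or.inr (by norm_num)) x
        (by push_cast; intro h0; exact hx (by push_cast; linarith))
      have hcast : (((-1) : ℚ) * x + (2)) / ((0 : ℚ) * x + (1))
          = ((((-1) : ℤ) : ℚ) * x + ((2 : ℤ) : ℚ)) / (((0 : ℤ) : ℚ) * x + ((1 : ℤ) : ℚ)) := by
        push_cast; ring
      rw [hcast, h]
      show _ = tq x.num (x.den : ℤ)
      exact tq_act_d0 x.num (x.den : ℤ)

lemma tp_e1 (v : Phi) : tp (mobP 1 (-1) 0 1 v) = t4 (tp v) := by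
  match v with
  | none => rfl
  | some none =>
      show tp (some (mob 1 (-1) 0 1 none)) = _
      norm_num [mob, tp, tq, s4, t4]
      rfl
  | some (some x) =>
      have hx : ¬((0 : ℚ) * x + (1) = 0) := by simp
      have step : mobP 1 (-1) 0 1 (some (some x))
          = some (some (((1 : ℚ) * x + ((-1))) / ((0 : ℚ) * x + (1)))) := by
        simp only [mobP, Option.map_some, mob, if_neg hx]
      rw [step]
      have h := tp_mobP_sl 1 (-1) 0 1 (Or.inl (by norm_num)) x
        (by push_cast; intro h0; exact hx (by push_cast; linarith))
      have hcast : ((1 : ℚ) * x + ((-1))) / ((0 : ℚ) * x + (1))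
          = (((1 : ℤ) : ℚ) * x + (((-1) : ℤ) : ℚ)) / (((0 : ℤ) : ℚ) * x + ((1 : ℤ) : ℚ)) := by
        push_cast; ring
      rw [hcast, h]
      show _ = t4 (tq x.num (x.den : ℤ))
      exact tq_act_e1 x.num (x.den : ℤ) (not_both_even x)

lemma tp_e2 (v : Phi) : tp (mobP 1 1 0 1 v) = t4 (tp v) := by
  match v with
  | none => rfl
  | some none =>
      show tp (some (mob 1 1 0 1 none)) = _
      norm_num [mob, tp, tq, s4, t4]
      rfl
  | some (some x) =>
      have hx : ¬((0 : ℚ) * x + (1) = 0) := by simp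
      have step : mobP 1 1 0 1 (some (some x))
          = some (some (((1 : ℚ) * x + (1)) / ((0 : ℚ) * x + (1)))) := by
        simp only [mobP, Option.map_some, mob, if_neg hx]
      rw [step]
      have h := tp_mobP_sl 1 1 0 1 (Or.inl (by norm_num)) x
        (by push_cast; intro h0; exact hx (by push_cast; linarith))
      have hcast : ((1 : ℚ) * x + (1)) / ((0 : ℚ) * x + (1))
          = (((1 : ℤ) : ℚ) * x + ((1 : ℤ) : ℚ)) / (((0 : ℤ) : ℚ) * x + ((1 : ℤ) : ℚ)) := by
        push_cast; ring
      rw [hcast, h]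
      show _ = t4 (tq x.num (x.den : ℤ))
      exact tq_act_e2 x.num (x.den : ℤ) (not_both_even x)

lemma tp_f (v : Phi) : tp (mobP (-1) (-4) 0 1 v) = tp v := by
  match v with
  | none => rfl
  | some none =>
      show tp (some (mob (-1) (-4) 0 1 none)) = _
      norm_num [mob, tp, tq, s4, t4]
  | some (some x) =>
      have hx : ¬((0 : ℚ) * x + (1) = 0) := by simp
      have step : mobP (-1) (-4) 0 1 (some (some x))
          = some (some ((((-1) : ℚ) * x + ((-4))) / ((0 : ℚ) * x + (1)))) := by
        simp only [mobP, Option.map_some, mob, if_neg hx]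
      rw [step]
      have h := tp_mobP_sl (-1) (-4) 0 1 (Or.inr (by norm_num)) x
        (by push_cast; intro h0; exact hx (by push_cast; linarith))
      have hcast : (((-1) : ℚ) * x + ((-4))) / ((0 : ℚ) * x + (1))
          = ((((-1) : ℤ) : ℚ) * x + (((-4) : ℤ) : ℚ)) / (((0 : ℤ) : ℚ) * x + ((1 : ℤ) : ℚ)) := by
        push_cast; ring
      rw [hcast, h]
      show _ = tq x.num (x.den : ℤ)
      exact tq_act_f x.num (x.den : ℤ)

/-! ### The finite-state invariant on 4-tuples -/

abbrev T4 := Fin 4 × Fin 4 × Fin 4 × Fin 4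

def F (x : Phi4) : T4 := (tp (x 0), tp (x 1), tp (x 2), tp (x 3))

def gA (t : T4) : T4 := (t.2.2.2, t.1, t.2.1, t.2.2.1)
def gB (t : T4) : T4 := (t.2.2.2, t.2.2.1, t.2.1, t.1)
def gC (t : T4) : T4 := (s4 t.1, s4 t.2.1, s4 t.2.2.1, s4 t.2.2.2)
def gD (t : T4) : T4 := (t.1, s4 t.2.1, t.2.2.1, s4 t.2.2.2)
def gE (t : T4) : T4 := (t.1, t4 t.2.2.1, t4 t.2.1, t.2.2.2)

lemma F_step {x y : Phi4} (h : stepM4 x y) :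
    F y = gA (F x) ∨ F y = gB (F x) ∨ F y = gC (F x) ∨ F y = gD (F x) ∨
      ((F x).1 = 1 ∧ F y = gE (F x)) ∨ F y = F x := by
  rcases h with h | h | h | h | h | h
  · left
    subst h
    simp only [F, gA, mapA, vec4_at0, vec4_at1, vec4_at2, vec4_at3]
  · right; left
    subst h
    simp only [F, gB, mapB, vec4_at0, vec4_at1, vec4_at2, vec4_at3]
  · right; right; left
    subst h
    simp only [F, gC, mapC, vec4_at0, vec4_at1, vec4_at2, vec4_at3, tp_c]
  · right; right; right; left
    subst h
    simp only [F, gD, mapD, vec4_at0, vec4_at1, vec4_at2, vec4_at3, tp_d0, tp_d1]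
  · right; right; right; right; left
    obtain ⟨h0, hy⟩ := h
    subst hy
    constructor
    · simp only [F, h0]
      rfl
    · simp only [F, gE, vec4_at0, vec4_at1, vec4_at2, vec4_at3, tp_e1, tp_e2, h0]
  · right; right; right; right; right
    obtain ⟨h0, h1, h2, hy⟩ := h
    subst hy
    simp only [F, vec4_at0, vec4_at1, vec4_at2, vec4_at3, tp_f, h0, h1, h2]

def ok (S : List T4) : Prop :=
  ∀ t : T4, ((t ∈ S) ↔ (gA t ∈ S)) ∧ ((t ∈ S) ↔ (gB t ∈ S)) ∧
    ((t ∈ S) ↔ (gC t ∈ S)) ∧ ((t ∈ S) ↔ (gD t ∈ S)) ∧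
    (t.1 = 1 → ((t ∈ S) ↔ (gE t ∈ S)))

set_option maxRecDepth 1000000 in
set_option synthInstance.maxHeartbeats 1000000 in
set_option synthInstance.maxSize 5000 in
instance : DecidablePred ok := fun _ => by unfold ok; infer_instance

lemma eqv_inv {S : List T4} (hS : ok S) {x y : Phi4}
    (h : Relation.EqvGen stepM4 x y) : F x ∈ S ↔ F y ∈ S := by
  induction h with
  | rel x y hxy =>
      rcases F_step hxy with h | h | h | h | ⟨h1, h⟩ | h <;> rw [h]
      · exact (hS (F x)).1
      · exact (hS (F x)).2.1
      · exact (hS (F x)).2.2.1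
      · exact (hS (F x)).2.2.2.1
      · exact (hS (F x)).2.2.2.2 h1
  | refl => exact Iff.rfl
  | symm _ _ _ ih => exact ih.symm
  | trans _ _ _ _ _ ih1 ih2 => exact ih1.trans ih2

lemma distinguish {S : List T4} (hS : ok S) {x y : Phi4}
    (hx : F x ∈ S) (hy : F y ∉ S) : ¬ Relation.EqvGen stepM4 x y :=
  fun h => hy ((eqv_inv hS h).mp hx)

def S0 : List T4 := [(0,3,3,3), (3,0,3,3), (3,3,0,3), (3,3,3,0)]
def S1 : List T4 := [(1,3,3,3), (2,3,3,3), (3,1,3,3), (3,2,3,3), (3,3,1,3), (3,3,2,3), (3,3,3,1), (3,3,3,2)]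
def S2 : List T4 := [(0,1,0,3), (0,1,3,1), (0,2,0,3), (0,2,3,2), (0,3,0,1), (0,3,0,2), (1,0,1,3), (1,0,3,0), (1,3,1,0), (2,0,2,3), (2,0,3,0), (2,3,2,0), (3,0,1,0), (3,0,2,0), (3,1,0,1), (3,2,0,2)]
def S3 : List T4 := [(0,0,0,0)]
def S4' : List T4 := [(0,0,0,1), (0,0,0,2), (0,0,1,0), (0,0,2,0), (0,1,0,0), (0,1,0,2), (0,1,1,1), (0,1,2,1), (0,2,0,0), (0,2,0,1), (0,2,1,2), (0,2,2,2), (1,0,0,0), (1,0,1,1), (1,0,1,2), (1,0,2,0), (1,1,0,1), (1,1,1,0), (1,1,2,2), (1,2,0,2), (1,2,1,0), (1,2,2,1), (2,0,0,0), (2,0,1,0), (2,0,2,1), (2,0,2,2), (2,1,0,1), (2,1,1,2), (2,1,2,0), (2,2,0,2), (2,2,1,1), (2,2,2,0)]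

set_option maxRecDepth 1000000 in
lemma okS0 : ok S0 := by decide
set_option maxRecDepth 1000000 in
lemma okS1 : ok S1 := by decide
set_option maxRecDepth 1000000 in
lemma okS2 : ok S2 := by decide
set_option maxRecDepth 1000000 in
lemma okS3 : ok S3 := by decide
set_option maxRecDepth 1000000 in
lemma okS4 : ok S4' := by decide

lemma Fval0 : F ![sl 0, emp, emp, emp] = (0,3,3,3) := rfl
lemma Fval1 : F ![inf, emp, emp, emp] = (2,3,3,3) := rfl
lemma Fval2 : F ![sl (-1), sl (-2), sl (-1), emp] = (1,0,1,3) := rfl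
lemma Fval3 : F ![sl (-2), sl (-2), sl (-2), sl (-2)] = (0,0,0,0) := rfl
lemma Fval4 : F ![sl (-1), sl (-3), sl (-2), sl (-3)] = (1,1,0,1) := rfl
lemma Fval5 : F ![sl (-1), sl (-2), sl (-3), sl (-4)] = (1,0,1,0) := rfl


set_option maxRecDepth 1000000

/-- No two of the six listed elements of Φ⁴ are related by any finite composition of the
maps a, b, c, d, e, f, i.e. they are pairwise inequivalent under the smallest equivalence
relation relating every 4-tuple to its image under each of these maps wherever defined. -/
theorem chainlink4_six_exceptional_fillings_pairwise_inequivalent :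
    List.Pairwise (fun x y => ¬ Relation.EqvGen stepM4 x y)
      [![sl 0, emp, emp, emp], ![inf, emp, emp, emp],
       ![sl (-1), sl (-2), sl (-1), emp], ![sl (-2), sl (-2), sl (-2), sl (-2)],
       ![sl (-1), sl (-3), sl (-2), sl (-3)], ![sl (-1), sl (-2), sl (-3), sl (-4)]] := by
  refine List.Pairwise.cons ?_ (List.Pairwise.cons ?_ (List.Pairwise.cons ?_
    (List.Pairwise.cons ?_ (List.Pairwise.cons ?_ (List.pairwise_singleton _ _)))))
  · intro y hy
    simp only [List.mem_cons, List.not_mem_nil, or_false] at hy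
    rcases hy with rfl | rfl | rfl | rfl | rfl
    · exact distinguish okS0 (by rw [Fval0]; decide) (by rw [Fval1]; decide)
    · exact distinguish okS0 (by rw [Fval0]; decide) (by rw [Fval2]; decide)
    · exact distinguish okS0 (by rw [Fval0]; decide) (by rw [Fval3]; decide)
    · exact distinguish okS0 (by rw [Fval0]; decide) (by rw [Fval4]; decide)
    · exact distinguish okS0 (by rw [Fval0]; decide) (by rw [Fval5]; decide)
  · intro y hy
    simp only [List.mem_cons, List.not_mem_nil, or_false] at hy
    rcases hy with rfl | rfl | rfl | rfl
    · exact distinguish okS1 (by rw [Fval1]; decide) (by rw [Fval2]; decide)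
    · exact distinguish okS1 (by rw [Fval1]; decide) (by rw [Fval3]; decide)
    · exact distinguish okS1 (by rw [Fval1]; decide) (by rw [Fval4]; decide)
    · exact distinguish okS1 (by rw [Fval1]; decide) (by rw [Fval5]; decide)
  · intro y hy
    simp only [List.mem_cons, List.not_mem_nil, or_false] at hy
    rcases hy with rfl | rfl | rfl
    · exact distinguish okS2 (by rw [Fval2]; decide) (by rw [Fval3]; decide)
    · exact distinguish okS2 (by rw [Fval2]; decide) (by rw [Fval4]; decide)
    · exact distinguish okS2 (by rw [Fval2]; decide) (by rw [Fval5]; decide)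
  · intro y hy
    simp only [List.mem_cons, List.not_mem_nil, or_false] at hy
    rcases hy with rfl | rfl
    · exact distinguish okS3 (by rw [Fval3]; decide) (by rw [Fval4]; decide)
    · exact distinguish okS3 (by rw [Fval3]; decide) (by rw [Fval5]; decide)
  · intro y hy
    simp only [List.mem_cons, List.not_mem_nil, or_false] at hy
    rcases hy with rfl
    exact distinguish okS4 (by rw [Fval4]; decide) (by rw [Fval5]; decide)
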